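/- Let β ∈ (0,1), m ∈ (0,1/2), b > 0 be real and define W : ℝ → ℝ by W(s) := −(1/2 + s)·(1 − β·(1/2 + m) − b·β·(m + s))/(1 − (1/2 − s)·β). Then W is strictly convex on the interval [−m, m]; indeed, for every s ∈ [−m, m] its second derivative equals 2·β·(b + 1)·(1 − β·(1/2 + m))·(1 − β)/(1 − (1/2 − s)·β)³, which is strictly positive. -/

import Mathlib

/-- Strict convexity of the principal's stationary value on [−m, m] (θ = 0, no commitment),
    with an explicit positive second derivative. -/
theorem stmt_18 (β m b : ℝ) (hβ0 : 0 < β) (hβ1 : β < 1)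
    (hm0 : 0 < m) (hm1 : m < 1/2) (hb : 0 < b)
    (W : ℝ → ℝ)
    (hW : W = fun s => -(1/2 + s) * (1 - β * (1/2 + m) - b * β * (m + s))
      / (1 - (1/2 - s) * β)) :
    StrictConvexOn ℝ (Set.Icc (-m) m) W ∧
    ∀ s ∈ Set.Icc (-m) m,
      deriv (deriv W) s
        = 2 * β * (b + 1) * (1 - β * (1/2 + m)) * (1 - β) / (1 - (1/2 - s) * β)^3 ∧
      0 < 2 * β * (b + 1) * (1 - β * (1/2 + m)) * (1 - β) / (1 - (1/2 - s) * β)^3 := by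
  -- abbreviations
  set Dd : ℝ → ℝ := fun s => 1 - (1/2 - s) * β with hDd
  set Nn : ℝ → ℝ := fun s => -(1/2 + s) * (1 - β * (1/2 + m) - b * β * (m + s)) with hNn
  set W1 : ℝ → ℝ := fun s =>
    ((-(1 - β * (1/2 + m) - b * β * (m + s)) + (1/2 + s) * (b * β)) * Dd s - Nn s * β)
      / (Dd s)^2 with hW1
  -- the open set where the denominator is positive
  set U : Set ℝ := Dd ⁻¹' Set.Ioi 0 with hU
  have hDcont : Continuous Dd := by fun_prop
  have hUopen : IsOpen U := isOpen_Ioi.preimage hDcont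
  have hIccU : Set.Icc (-m) m ⊆ U := by
    intro s hs
    have h1 : 1/2 - s ≤ 1/2 + m := by linarith [hs.1]
    have h2 : (1/2 - s) * β ≤ (1/2 + m) * β :=
      mul_le_mul_of_nonneg_right h1 hβ0.le
    have h3 : (1/2 + m) * β < 1 := by nlinarith
    simp only [hU, Set.mem_preimage, Set.mem_Ioi, hDd]
    linarith
  have hDpos : ∀ s ∈ U, 0 < Dd s := fun s hs => hs
  -- first derivative on U
  have hderivN : ∀ s : ℝ, HasDerivAt Nn
      (-(1 - β * (1/2 + m) - b * β * (m + s)) + (1/2 + s) * (b * β)) s := by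
    intro s
    have h1 : HasDerivAt (fun s : ℝ => -(1/2 + s)) (-1) s := by
      simpa only [neg_neg, Pi.neg_def, id_eq] using ((hasDerivAt_id s).const_add (1/2)).neg
    have h2 : HasDerivAt (fun s : ℝ => 1 - β * (1/2 + m) - b * β * (m + s)) (-(b*β)) s := by
      have h : HasDerivAt (fun s : ℝ => b * β * (m + s)) (b*β) s := by
        simpa only [mul_one, id_eq] using ((hasDerivAt_id s).const_add m).const_mul (b*β)
      simpa only [] using h.const_sub (1 - β * (1/2 + m))
    have := h1.mul h2
    refine this.congr_deriv ?_
    ring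
  have hderivD : ∀ s : ℝ, HasDerivAt Dd β s := by
    intro s
    have h : HasDerivAt (fun s : ℝ => (1/2 - s) * β) (-β) s := by
      simpa only [neg_one_mul, neg_mul, one_mul, id_eq] using ((hasDerivAt_id s).const_sub (1/2)).mul_const β
    simpa only [neg_neg] using h.const_sub 1
  have hderivW : ∀ s ∈ U, HasDerivAt W (W1 s) s := by
    intro s hs
    have hD := (hDpos s hs).ne'
    have := (hderivN s).div (hderivD s) hD
    rw [hW]
    exact this
  have hWeq : Set.EqOn (deriv W) W1 U := by
    intro s hs
    exact (hderivW s hs).deriv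
  -- second derivative on U
  have hderivW1 : ∀ s ∈ U, HasDerivAt W1
      (2 * β * (b + 1) * (1 - β * (1/2 + m)) * (1 - β) / (Dd s)^3) s := by
    intro s hs
    have hD := (hDpos s hs).ne'
    have hD2 : (Dd s)^2 ≠ 0 := pow_ne_zero _ hD
    -- derivative of the numerator of W1
    have hnum : HasDerivAt (fun s : ℝ =>
        (-(1 - β * (1/2 + m) - b * β * (m + s)) + (1/2 + s) * (b * β)) * Dd s - Nn s * β)
        ((b * β + b * β) * Dd s
          + (-(1 - β * (1/2 + m) - b * β * (m + s)) + (1/2 + s) * (b * β)) * β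
          - (-(1 - β * (1/2 + m) - b * β * (m + s)) + (1/2 + s) * (b * β)) * β) s := by
      have h1 : HasDerivAt (fun s : ℝ =>
          -(1 - β * (1/2 + m) - b * β * (m + s)) + (1/2 + s) * (b * β)) (b*β + b*β) s := by
        have ha : HasDerivAt (fun s : ℝ => -(1 - β * (1/2 + m) - b * β * (m + s))) (b*β) s := by
          have h : HasDerivAt (fun s : ℝ => b * β * (m + s)) (b*β) s := by
            simpa only [mul_one, id_eq] using ((hasDerivAt_id s).const_add m).const_mul (b*β)
          simpa only [neg_neg, Pi.neg_def] using (h.const_sub (1 - β * (1/2 + m))).neg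
        have hb' : HasDerivAt (fun s : ℝ => (1/2 + s) * (b * β)) (b*β) s := by
          simpa only [one_mul, id_eq] using ((hasDerivAt_id s).const_add (1/2)).mul_const (b*β)
        exact ha.add hb'
      exact (h1.mul (hderivD s)).sub ((hderivN s).mul_const β)
    have hden : HasDerivAt (fun s : ℝ => (Dd s)^2) (2 * Dd s ^ 1 * β) s :=
      (hderivD s).pow 2
    have := hnum.div hden hD2
    refine this.congr_deriv ?_
    have hDp := hDpos s hs
    rw [div_eq_div_iff (by positivity) (by positivity)]
    simp only [hNn, hDd]
    ring
  have hW2eq : ∀ s ∈ U, deriv (deriv W) s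
      = 2 * β * (b + 1) * (1 - β * (1/2 + m)) * (1 - β) / (Dd s)^3 := by
    intro s hs
    have hmem : U ∈ nhds s := hUopen.mem_nhds hs
    have hEv : deriv W =ᶠ[nhds s] W1 := Filter.eventuallyEq_of_mem hmem hWeq
    rw [hEv.deriv_eq]
    exact (hderivW1 s hs).deriv
  have hApos : 0 < 1 - β * (1/2 + m) := by nlinarith
  have hpos : ∀ s ∈ U,
      0 < 2 * β * (b + 1) * (1 - β * (1/2 + m)) * (1 - β) / (Dd s)^3 := by
    intro s hs
    apply div_pos
    · have h1 : (0:ℝ) < b + 1 := by linarith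
      have h2 : (0:ℝ) < 1 - β := by linarith
      positivity
    · exact pow_pos (hDpos s hs) 3
  constructor
  · apply strictConvexOn_of_deriv2_pos (convex_Icc _ _)
    · rw [hW]
      apply ContinuousOn.div
      · fun_prop
      · fun_prop
      · intro s hs
        exact (hDpos s (hIccU hs)).ne'
    · intro s hs
      rw [interior_Icc] at hs
      have hsU : s ∈ U := hIccU (Set.mem_Icc_of_Ioo hs)
      have : deriv^[2] W s = deriv (deriv W) s := by
        simp [Function.iterate_succ, Function.iterate_one]
      rw [this, hW2eq s hsU]
      exact hpos s hsU
  · intro s hs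
    exact ⟨hW2eq s (hIccU hs), hpos s (hIccU hs)⟩
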